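/- The quantum strategy in which Alice and Charlie each share a maximally entangled two-qubit state with Bob, Bob measures in the Bell basis, and Alice (resp. Charlie) measure in bases at angles {0, π/2} (resp. {π/4, 3π/4}) conditioned on their uniform inputs, wins the adaptive CHSH game with probability exactly 1/2 + 1/(2√2). Concretely, for each of Bob's four outcomes b, the conditional distribution P_{AC|R_A R_C, B=b}(ac|r_A r_C) takes values (1±1/√2)/4 with the sign pattern such that for each b the probability of satisfying the winning condition associated with b, averaged uniformly over (r_A, r_C), equals 1/2 + 1/(2√2). -/

import Mathlib

noncomputable section

/-- The qubit state `|θ⟩ = cos(θ/2)|0⟩ + sin(θ/2)|1⟩` (basis indexed by `Bool`,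
`false = |0⟩`, `true = |1⟩`). -/
def ket (θ : ℝ) (x : Bool) : ℂ :=
  if x then (Real.sin (θ / 2) : ℂ) else (Real.cos (θ / 2) : ℂ)

/-- The basis vector of the angle-`θ` measurement basis `{|θ⟩, |θ+π⟩}`
corresponding to outcome `o` (`false ↦ |θ⟩`, `true ↦ |θ+π⟩`). -/
def mvec (θ : ℝ) (o : Bool) : Bool → ℂ :=
  ket (if o then θ + Real.pi else θ)

/-- The Bell state `|Ψ_{ij}⟩`: `i` flips the second bit, `j` gives the relative
sign, so `Ψ_{00} = (|00⟩+|11⟩)/√2`, `Ψ_{01} = (|00⟩-|11⟩)/√2`,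
`Ψ_{10} = (|01⟩+|10⟩)/√2`, `Ψ_{11} = (|01⟩-|10⟩)/√2`. -/
def bell (b : Bool × Bool) (x y : Bool) : ℂ :=
  if Bool.xor x y = b.1 then
    (if x then (if b.2 then (-1 : ℂ) else 1) else 1) * ((Real.sqrt 2)⁻¹ : ℝ)
  else 0

/-- The four-qubit state `|Ψ₀₀⟩_{AB} ⊗ |Ψ₀₀⟩_{B'C}` shared by the two sources. -/
def sharedState (x y y' z : Bool) : ℂ :=
  bell (false, false) x y * bell (false, false) y' z

/-- Alice's measurement angles: `θ = 0` for input 0 and `θ = π/2` for input 1. -/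
def angleA (r : Bool) : ℝ := if r then Real.pi / 2 else 0

/-- Charlie's measurement angles: `θ = π/4` for input 0 and `θ = 3π/4` for input 1. -/
def angleC (r : Bool) : ℝ := if r then 3 * Real.pi / 4 else Real.pi / 4

/-- The amplitude for Alice getting outcome `a`, Bob getting Bell-basis outcome
`b` on `BB'`, and Charlie getting outcome `c`, on inputs `rA, rC`. -/
def ampl (b : Bool × Bool) (a c rA rC : Bool) : ℂ :=
  ∑ x : Bool, ∑ y : Bool, ∑ y' : Bool, ∑ z : Bool,
    (starRingEnd ℂ) (mvec (angleA rA) a x * bell b y y' * mvec (angleC rC) c z) *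
      sharedState x y y' z

/-- Born-rule probability of the joint outcome `(a, b, c)` given inputs `(rA, rC)`. -/
def bornProb (b : Bool × Bool) (a c rA rC : Bool) : ℝ :=
  ‖ampl b a c rA rC‖ ^ 2

/-- The adaptive-CHSH winning condition associated with Bob's output `b`. -/
def adaptiveTarget : Bool × Bool → Bool → Bool → Bool
  | (false, false), rA, rC => Bool.xor (rA && rC) rC
  | (false, true),  rA, rC => Bool.xor (Bool.xor (rA && rC) rA) rC
  | (true, false),  rA, rC => !(Bool.xor (Bool.xor (rA && rC) rA) rC)
  | (true, true),   rA, rC => !(Bool.xor (rA && rC) rC)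

/-! ### Auxiliary machinery -/

/-- `cos (π/8)`. -/
def cp : ℝ := Real.sqrt (2 + Real.sqrt 2) / 2
/-- `sin (π/8)`. -/
def cm : ℝ := Real.sqrt (2 - Real.sqrt 2) / 2

lemma cA1 : Real.cos ((0:ℝ) / 2) = 1 := by norm_num
lemma sA1 : Real.sin ((0:ℝ) / 2) = 0 := by norm_num
lemma cA2 : Real.cos (Real.pi / 2 / 2) = Real.sqrt 2 / 2 := by
  rw [show Real.pi/2/2 = Real.pi/4 by ring]; exact Real.cos_pi_div_four
lemma sA2 : Real.sin (Real.pi / 2 / 2) = Real.sqrt 2 / 2 := by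
  rw [show Real.pi/2/2 = Real.pi/4 by ring]; exact Real.sin_pi_div_four
lemma cA3 : Real.cos (((0:ℝ) + Real.pi) / 2) = 0 := by
  rw [show ((0:ℝ)+Real.pi)/2 = Real.pi/2 by ring]; exact Real.cos_pi_div_two
lemma sA3 : Real.sin (((0:ℝ) + Real.pi) / 2) = 1 := by
  rw [show ((0:ℝ)+Real.pi)/2 = Real.pi/2 by ring]; exact Real.sin_pi_div_two
lemma cA4 : Real.cos ((Real.pi / 2 + Real.pi) / 2) = -(Real.sqrt 2 / 2) := by
  rw [show (Real.pi/2+Real.pi)/2 = Real.pi - Real.pi/4 by ring, Real.cos_pi_sub,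
    Real.cos_pi_div_four]
lemma sA4 : Real.sin ((Real.pi / 2 + Real.pi) / 2) = Real.sqrt 2 / 2 := by
  rw [show (Real.pi/2+Real.pi)/2 = Real.pi - Real.pi/4 by ring, Real.sin_pi_sub,
    Real.sin_pi_div_four]
lemma cC1 : Real.cos (Real.pi / 4 / 2) = cp := by
  rw [show Real.pi/4/2 = Real.pi/8 by ring]; exact Real.cos_pi_div_eight
lemma sC1 : Real.sin (Real.pi / 4 / 2) = cm := by
  rw [show Real.pi/4/2 = Real.pi/8 by ring]; exact Real.sin_pi_div_eight
lemma cC2 : Real.cos (3 * Real.pi / 4 / 2) = cm := by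
  rw [show 3*Real.pi/4/2 = Real.pi/2 - Real.pi/8 by ring, Real.cos_pi_div_two_sub]
  exact Real.sin_pi_div_eight
lemma sC2 : Real.sin (3 * Real.pi / 4 / 2) = cp := by
  rw [show 3*Real.pi/4/2 = Real.pi/2 - Real.pi/8 by ring, Real.sin_pi_div_two_sub]
  exact Real.cos_pi_div_eight
lemma cC3 : Real.cos ((Real.pi / 4 + Real.pi) / 2) = -cm := by
  rw [show (Real.pi/4+Real.pi)/2 = Real.pi - (Real.pi/2 - Real.pi/8) by ring,
    Real.cos_pi_sub, Real.cos_pi_div_two_sub, Real.sin_pi_div_eight]; rfl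
lemma sC3 : Real.sin ((Real.pi / 4 + Real.pi) / 2) = cp := by
  rw [show (Real.pi/4+Real.pi)/2 = Real.pi - (Real.pi/2 - Real.pi/8) by ring,
    Real.sin_pi_sub, Real.sin_pi_div_two_sub, Real.cos_pi_div_eight]; rfl
lemma cC4 : Real.cos ((3 * Real.pi / 4 + Real.pi) / 2) = -cp := by
  rw [show (3*Real.pi/4+Real.pi)/2 = Real.pi - Real.pi/8 by ring,
    Real.cos_pi_sub, Real.cos_pi_div_eight]; rfl
lemma sC4 : Real.sin ((3 * Real.pi / 4 + Real.pi) / 2) = cm := by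
  rw [show (3*Real.pi/4+Real.pi)/2 = Real.pi - Real.pi/8 by ring,
    Real.sin_pi_sub, Real.sin_pi_div_eight]; rfl

lemma mvecA_ff (x : Bool) : mvec (angleA false) false x = ((if x then (0:ℝ) else 1 : ℝ) : ℂ) := by
  cases x <;> simp only [mvec, angleA, ket, Bool.false_eq_true, if_false, if_true] <;>
    first | rw [cA1] | rw [sA1]
lemma mvecA_tf (x : Bool) : mvec (angleA true) false x
    = ((if x then Real.sqrt 2/2 else Real.sqrt 2/2 : ℝ) : ℂ) := by
  cases x <;> simp only [mvec, angleA, ket, Bool.false_eq_true, if_false, if_true] <;>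
    first | rw [cA2] | rw [sA2]
lemma mvecA_ft (x : Bool) : mvec (angleA false) true x = ((if x then (1:ℝ) else 0 : ℝ) : ℂ) := by
  cases x <;> simp only [mvec, angleA, ket, Bool.false_eq_true, if_false, if_true] <;>
    first | rw [cA3] | rw [sA3]
lemma mvecA_tt (x : Bool) : mvec (angleA true) true x
    = ((if x then Real.sqrt 2/2 else -(Real.sqrt 2/2) : ℝ) : ℂ) := by
  cases x <;> simp only [mvec, angleA, ket, Bool.false_eq_true, if_false, if_true] <;>
    first | rw [cA4] | rw [sA4]
lemma mvecC_ff (x : Bool) : mvec (angleC false) false x = ((if x then cm else cp : ℝ) : ℂ) := by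
  cases x <;> simp only [mvec, angleC, ket, Bool.false_eq_true, if_false, if_true] <;>
    first | rw [cC1] | rw [sC1]
lemma mvecC_tf (x : Bool) : mvec (angleC true) false x = ((if x then cp else cm : ℝ) : ℂ) := by
  cases x <;> simp only [mvec, angleC, ket, Bool.false_eq_true, if_false, if_true] <;>
    first | rw [cC2] | rw [sC2]
lemma mvecC_ft (x : Bool) : mvec (angleC false) true x = ((if x then cp else -cm : ℝ) : ℂ) := by
  cases x <;> simp only [mvec, angleC, ket, Bool.false_eq_true, if_false, if_true] <;>
    first | rw [cC3] | rw [sC3]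
lemma mvecC_tt (x : Bool) : mvec (angleC true) true x = ((if x then cm else -cp : ℝ) : ℂ) := by
  cases x <;> simp only [mvec, angleC, ket, Bool.false_eq_true, if_false, if_true] <;>
    first | rw [cC4] | rw [sC4]

lemma bell_eval (b : Bool × Bool) (x y : Bool) :
    bell b x y = (((if Bool.xor x y = b.1 then
      (if x then (if b.2 then -1 else 1) else 1) * (Real.sqrt 2)⁻¹ else 0) : ℝ) : ℂ) := by
  simp only [bell]; split_ifs <;> push_cast <;> ring

lemma sqrt_two_sq : Real.sqrt 2 ^ 2 = 2 := Real.sq_sqrt (by norm_num)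

lemma two_sub_sqrt_two_nonneg : (0:ℝ) ≤ 2 - Real.sqrt 2 := by
  nlinarith [sqrt_two_sq, Real.sqrt_nonneg 2]

lemma cp_sq : cp ^ 2 = (2 + Real.sqrt 2) / 4 := by
  have h : (0:ℝ) ≤ 2 + Real.sqrt 2 := by positivity
  rw [cp, div_pow, Real.sq_sqrt h]; norm_num

lemma cm_sq : cm ^ 2 = (2 - Real.sqrt 2) / 4 := by
  rw [cm, div_pow, Real.sq_sqrt two_sub_sqrt_two_nonneg]; norm_num

lemma cp_mul_cm : cp * cm = Real.sqrt 2 / 4 := by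
  have h1 : (0:ℝ) ≤ 2 + Real.sqrt 2 := by positivity
  rw [cp, cm, div_mul_div_comm, ← Real.sqrt_mul h1]
  rw [show (2 + Real.sqrt 2) * (2 - Real.sqrt 2) = 4 - Real.sqrt 2 ^ 2 by ring, sqrt_two_sq]
  norm_num

lemma sqrt_two_inv : (Real.sqrt 2)⁻¹ = Real.sqrt 2 / 2 := by
  have h := Real.mul_self_sqrt (by norm_num : (0:ℝ) ≤ 2)
  field_simp
  rw [Real.sq_sqrt (by norm_num)]

set_option maxHeartbeats 4000000 in
/-- Every outcome probability is `(2 ± √2)/32`, with `+` exactly on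
the winning outcomes. -/
lemma born_eval (b1 b2 a c rA rC : Bool) :
    bornProb (b1, b2) a c rA rC
      = (2 + (if Bool.xor a c = adaptiveTarget (b1, b2) rA rC then Real.sqrt 2
          else -(Real.sqrt 2))) / 32 := by
  have h2 := sqrt_two_sq
  have hp := cp_sq
  have hm := cm_sq
  have hpm := cp_mul_cm
  have p3 : Real.sqrt 2 ^ 3 = 2 * Real.sqrt 2 := by rw [pow_succ, h2]
  have p4 : Real.sqrt 2 ^ 4 = 4 := by rw [pow_succ, p3]; nlinarith [h2]
  have p5 : Real.sqrt 2 ^ 5 = 4 * Real.sqrt 2 := by rw [pow_succ, p4]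
  have p6 : Real.sqrt 2 ^ 6 = 8 := by rw [pow_succ, p5]; nlinarith [h2]
  have p7 : Real.sqrt 2 ^ 7 = 8 * Real.sqrt 2 := by rw [pow_succ, p6]
  have p8 : Real.sqrt 2 ^ 8 = 16 := by rw [pow_succ, p7]; nlinarith [h2]
  cases b1 <;> cases b2 <;> cases a <;> cases c <;> cases rA <;> cases rC <;>
  · simp only [bornProb, ampl, Fintype.sum_bool, sharedState, bell_eval, adaptiveTarget,
      mvecA_ff, mvecA_ft, mvecA_tf, mvecA_tt, mvecC_ff, mvecC_ft, mvecC_tf, mvecC_tt,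
      Bool.xor_false, Bool.xor_true, Bool.false_eq_true, Bool.true_eq_false,
      Bool.not_true, Bool.not_false, Bool.and_self, Bool.and_false, Bool.false_and,
      Bool.true_and, Bool.and_true, if_true, if_false,
      Complex.conj_ofReal, ← Complex.ofReal_mul, ← Complex.ofReal_add, Complex.norm_real, Real.norm_eq_abs]
    rw [sq_abs, sqrt_two_inv]
    ring_nf
    simp only [p8, p7, p6, p5, p4, p3, h2]
    ring_nf
    linarith [hp, hm, hpm]

set_option maxHeartbeats 1000000 in
/-- For each of Bob's four Bell-basis outcomes `b`, the probability (with inputs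
uniform) of jointly obtaining `B = b` and winning the corresponding CHSH-type
game is `(1/4)·(1/2 + 1/(2√2))`; summing over `b`, the quantum strategy wins the
adaptive CHSH game with probability exactly `1/2 + 1/(2√2)`. -/
theorem quantum_adaptive_chsh_value (b : Bool × Bool) :
    (1/4 : ℝ) * ∑ rA : Bool, ∑ rC : Bool, ∑ a : Bool, ∑ c : Bool,
      (if Bool.xor a c = adaptiveTarget b rA rC then bornProb b a c rA rC else 0)
    = (1/4) * (1/2 + 1/(2 * Real.sqrt 2)) := by
  have hrhs : (1:ℝ)/(2 * Real.sqrt 2) = Real.sqrt 2 / 4 := by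
    rw [div_eq_div_iff (by positivity) (by norm_num)]
    nlinarith [Real.mul_self_sqrt (by norm_num : (0:ℝ) ≤ 2)]
  rcases b with ⟨b1, b2⟩
  cases b1 <;> cases b2 <;>
  · simp only [Fintype.sum_bool, born_eval, adaptiveTarget,
      Bool.xor_false, Bool.xor_true, Bool.false_eq_true, Bool.true_eq_false,
      Bool.not_true, Bool.not_false, Bool.and_self, Bool.and_false, Bool.false_and,
      Bool.true_and, Bool.and_true, if_true, if_false]
    rw [hrhs]
    ring

end
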